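/- The determinant of the linear lattice Λ(3^{n-1}, 2, 2, 3^{n-1}, 2) (i.e., n−1 threes, then 2, 2, then n−1 threes, then 2) equals F(2n+1)², where F denotes the odd-indexed Fibonacci numbers with F(1)=1, F(3)=2, F(2n+3)=3F(2n+1)−F(2n-1), for all n ≥ 2. -/
import Mathlib


/-- `oddFib n = F(2n+1)`, the odd-indexed Fibonacci numbers:
`F(1) = 1`, `F(3) = 2`, `F(2n+3) = 3·F(2n+1) − F(2n-1)`. -/
def oddFib : ℕ → ℤ
  | 0 => 1
  | 1 => 2
  | n + 2 => 3 * oddFib (n + 1) - oddFib n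

/-- The diagonal `(3^{n-1}, 2, 2, 3^{n-1}, 2)` of the linear lattice, of length `2n+1`. -/
def diagWeights (n : ℕ) (i : Fin (2 * n + 1)) : ℤ :=
  if (i : ℕ) < n - 1 then 3
  else if (i : ℕ) < n + 1 then 2
  else if (i : ℕ) < 2 * n then 3
  else 2

/-- Gram matrix of the linear lattice `Λ(3^{n-1},2,2,3^{n-1},2)`. -/
def gramLattice (n : ℕ) : Matrix (Fin (2 * n + 1)) (Fin (2 * n + 1)) ℤ :=
  Matrix.of fun i j =>
    if i = j then diagWeights n i
    else if (i : ℕ) + 1 = (j : ℕ) ∨ (j : ℕ) + 1 = (i : ℕ) then -1 else 0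

/-! ### Auxiliary: general tridiagonal matrices and continuants -/

/-- General tridiagonal matrix with diagonal `d` and off-diagonal entries `-1`. -/
def tri (d : ℕ → ℤ) (m : ℕ) : Matrix (Fin m) (Fin m) ℤ :=
  Matrix.of fun i j =>
    if (i : ℕ) = (j : ℕ) then d i
    else if (i : ℕ) + 1 = (j : ℕ) ∨ (j : ℕ) + 1 = (i : ℕ) then -1 else 0

/-- The continuant recursion computing `det (tri d m)`. -/
def cont (d : ℕ → ℤ) : ℕ → ℤ
  | 0 => 1
  | 1 => d 0
  | k + 2 => d (k + 1) * cont d (k + 1) - cont d k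

lemma tri_congr_val (d : ℕ → ℤ) {m m' : ℕ} (i j : Fin m) (i' j' : Fin m')
    (hi : (i : ℕ) = (i' : ℕ)) (hj : (j : ℕ) = (j' : ℕ)) :
    tri d m i j = tri d m' i' j' := by
  simp [tri, hi, hj]

lemma succAbove_mid_val (m : ℕ) (i : Fin (m+1)) :
    ((((Fin.last m).castSucc : Fin (m+2)).succAbove i : Fin (m+2)) : ℕ) =
      if (i : ℕ) < m then (i : ℕ) else (i : ℕ) + 1 := by
  rcases lt_or_ge (i.castSucc) ((Fin.last m).castSucc) with h | h
  · rw [Fin.succAbove_of_castSucc_lt _ _ h]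
    have : (i : ℕ) < m := by simpa [Fin.lt_def] using h
    simp [this]
  · rw [Fin.succAbove_of_le_castSucc _ _ h]
    have : ¬ (i : ℕ) < m := by simpa [Fin.le_def] using h
    simp [this]

theorem tri_det (d : ℕ → ℤ) : ∀ m, (tri d m).det = cont d m := by
  intro m
  induction m using Nat.strong_induction_on with
  | _ m ih =>
    match m with
    | 0 => simp [cont]
    | 1 => simp [Matrix.det_fin_one, tri, cont]
    | m + 2 =>
      rw [show (m+2) = (m+1).succ from rfl,
        Matrix.det_succ_column (tri d (m+2)) (Fin.last (m+1))]
      rw [Fin.sum_univ_castSucc, Fin.sum_univ_castSucc]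
      have hz : ∀ j : Fin m,
          (-1:ℤ) ^ ((j.castSucc.castSucc : ℕ) + (Fin.last (m+1) : ℕ)) *
            tri d (m+2) j.castSucc.castSucc (Fin.last (m+1)) *
            ((tri d (m+2)).submatrix (j.castSucc.castSucc).succAbove
              (Fin.last (m+1)).succAbove).det = 0 := by
        intro j
        have hj : (j : ℕ) < m := j.isLt
        have : tri d (m+2) j.castSucc.castSucc (Fin.last (m+1)) = 0 := by
          simp only [tri, Matrix.of_apply, Fin.coe_castSucc, Fin.val_last]
          rw [if_neg (by omega), if_neg (by omega)]
        rw [this]; ring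
      rw [Finset.sum_congr rfl (fun j _ => hz j), Finset.sum_const_zero, zero_add]
      -- last term: i = last (m+1)
      have hlast : ((tri d (m+2)).submatrix (Fin.last (m+1)).succAbove
          (Fin.last (m+1)).succAbove) = tri d (m+1) := by
        ext i j
        rw [Matrix.submatrix_apply, Fin.succAbove_last]
        exact tri_congr_val d _ _ i j (by simp) (by simp)
      -- middle term: i with val m, i.e. (Fin.last m).castSucc
      have hBdet : ((tri d (m+2)).submatrix ((Fin.last m).castSucc).succAbove
          (Fin.last (m+1)).succAbove).det = - cont d m := by
        set B := (tri d (m+2)).submatrix ((Fin.last m).castSucc).succAbove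
          (Fin.last (m+1)).succAbove with hB
        rw [Matrix.det_succ_row B (Fin.last m)]
        rw [Fin.sum_univ_castSucc]
        have hz2 : ∀ j : Fin m,
            (-1:ℤ) ^ ((Fin.last m : ℕ) + (j.castSucc : ℕ)) *
              B (Fin.last m) j.castSucc *
              (B.submatrix (Fin.last m).succAbove (j.castSucc).succAbove).det = 0 := by
          intro j
          have hj : (j : ℕ) < m := j.isLt
          have : B (Fin.last m) j.castSucc = 0 := by
            rw [hB, Matrix.submatrix_apply, Fin.succAbove_last]
            have hv : ((((Fin.last m).castSucc : Fin (m+2)).succAbove (Fin.last m)) : ℕ)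
                = m + 1 := by rw [succAbove_mid_val]; simp
            simp only [tri, Matrix.of_apply, hv, Fin.coe_castSucc, Fin.coe_castSucc]
            rw [if_neg (by omega), if_neg (by omega)]
          rw [this]; ring
        rw [Finset.sum_congr rfl (fun j _ => hz2 j), Finset.sum_const_zero, zero_add]
        have hentry : B (Fin.last m) (Fin.last m) = -1 := by
          rw [hB, Matrix.submatrix_apply, Fin.succAbove_last]
          have hv : ((((Fin.last m).castSucc : Fin (m+2)).succAbove (Fin.last m)) : ℕ)
              = m + 1 := by rw [succAbove_mid_val]; simp
          simp only [tri, Matrix.of_apply, hv, Fin.coe_castSucc, Fin.val_last]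
          rw [if_neg (by omega)]; simp
        have hminor : B.submatrix (Fin.last m).succAbove (Fin.last m).succAbove
            = tri d m := by
          ext i j
          simp only [hB, Matrix.submatrix_apply]
          refine tri_congr_val d _ _ i j ?_ ?_
          · rw [Fin.succAbove_last, succAbove_mid_val]
            simp [i.isLt]
          · rw [Fin.succAbove_last, Fin.succAbove_last]
            simp
        rw [hentry, hminor, ih m (by omega)]
        have hs : (-1:ℤ) ^ ((Fin.last m : ℕ) + (Fin.last m : ℕ)) = 1 := by
          rw [Fin.val_last, show m + m = 2*m from by ring, pow_mul]; simp
        rw [hs]; ring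
      rw [hlast, hBdet, ih (m+1) (by omega)]
      have e1 : tri d (m+2) ((Fin.last m).castSucc) (Fin.last (m+1)) = -1 := by
        simp only [tri, Matrix.of_apply, Fin.coe_castSucc, Fin.val_last]
        rw [if_neg (by omega)]; simp
      have e2 : tri d (m+2) (Fin.last (m+1)) (Fin.last (m+1)) = d (m+1) := by
        simp [tri]
      rw [e1, e2]
      simp only [Fin.coe_castSucc, Fin.val_last, cont]
      have s1 : (-1:ℤ) ^ ((m : ℕ) + (m+1)) = -1 := by
        rw [show (m:ℕ) + (m+1) = 2*m+1 from by ring, pow_succ, pow_mul]; simp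
      have s2 : (-1:ℤ) ^ ((m+1 : ℕ) + (m+1)) = 1 := by
        rw [show (m+1 : ℕ) + (m+1) = 2*(m+1) from by ring, pow_mul]; simp
      rw [s1, s2]
      ring

/-! ### The specific diagonal and the continuant computation -/

/-- The diagonal of `Λ(3^{m+1},2,2,3^{m+1},2)` as a function on `ℕ` (here `n = m+2`). -/
def wf (m : ℕ) : ℕ → ℤ := fun k =>
  if k < m + 1 then 3 else if k < m + 3 then 2 else if k < 2 * m + 4 then 3 else 2

def sA : ℕ → ℤ
  | 0 => 1
  | 1 => 1
  | k + 2 => 3 * sA (k + 1) - sA k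

def sB : ℕ → ℤ
  | 0 => 0
  | 1 => 1
  | k + 2 => 3 * sB (k + 1) - sB k

lemma L1 (m : ℕ) : ∀ k, k ≤ m →
    cont (wf m) k = oddFib (k+1) - oddFib k ∧
    cont (wf m) (k+1) = oddFib (k+2) - oddFib (k+1) := by
  intro k
  induction k with
  | zero =>
    intro _
    constructor
    · simp [cont, oddFib]
    · have : wf m 0 = 3 := by simp [wf]
      simp [cont, oddFib, this]
  | succ k ihk =>
    intro hk
    obtain ⟨h1, h2⟩ := ihk (by omega)
    refine ⟨h2, ?_⟩
    have hw : wf m (k+1) = 3 := by simp [wf]; omega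
    rw [show k+1+1 = k+2 from rfl, cont, hw, h1, h2]
    simp only [oddFib]; ring

lemma c1 (m : ℕ) : cont (wf m) (m+2) = oddFib (m+2) := by
  obtain ⟨h1, h2⟩ := L1 m m le_rfl
  rw [cont, h1, h2]
  have hw : wf m (m+1) = 2 := by
    simp only [wf]; rw [if_neg (by omega), if_pos (by omega)]
  rw [hw]
  simp only [oddFib]; ring

lemma c2 (m : ℕ) : cont (wf m) (m+3) = oddFib (m+2) + oddFib (m+1) := by
  obtain ⟨h1, h2⟩ := L1 m m le_rfl
  rw [show m+3 = (m+1)+2 from by ring, cont, c1 m, h2]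
  have hw : wf m (m+2) = 2 := by
    simp only [wf]; rw [if_neg (by omega), if_pos (by omega)]
  rw [hw]
  simp only [oddFib]; ring

lemma L2 (m : ℕ) : ∀ k, k ≤ m + 1 →
    cont (wf m) (m+2+k) = sA k * oddFib (m+2) + sB k * oddFib (m+1) ∧
    cont (wf m) (m+3+k) = sA (k+1) * oddFib (m+2) + sB (k+1) * oddFib (m+1) := by
  intro k
  induction k with
  | zero =>
    intro _
    constructor
    · simpa [sA, sB] using c1 m
    · simpa [sA, sB] using c2 m
  | succ k ihk =>
    intro hk
    obtain ⟨h1, h2⟩ := ihk (by omega)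
    constructor
    · rw [show m+2+(k+1) = m+3+k from by ring]; exact h2
    · have hw : wf m (m+3+k) = 3 := by
        simp only [wf]
        rw [if_neg (by omega), if_neg (by omega), if_pos (by omega)]
      rw [show m+3+(k+1) = (m+2+k)+2 from by ring, cont,
        show m+2+k+1 = m+3+k from by ring, hw, h1, h2]
      simp [sA, sB]; ring

lemma K (k : ℕ) : (sA (k+1) = oddFib k ∧ sB (k+1) = oddFib (k+1) - oddFib k) ∧
    (sA (k+2) = oddFib (k+1) ∧ sB (k+2) = oddFib (k+2) - oddFib (k+1)) := by
  induction k with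
  | zero => norm_num [sA, sB, oddFib]
  | succ k ihk =>
    obtain ⟨⟨a1, b1⟩, a2, b2⟩ := ihk
    refine ⟨⟨a2, b2⟩, ?_, ?_⟩
    · rw [show k+1+2 = (k+1)+2 from rfl, sA, a2, a1]
      simp [oddFib]
    · rw [show k+1+2 = (k+1)+2 from rfl, sB, b2, b1]
      simp only [oddFib]; ring

theorem final (m : ℕ) : cont (wf m) (2*m+5) = oddFib (m+2) ^ 2 := by
  obtain ⟨h1, h2⟩ := L2 m (m+1) le_rfl
  have hw : wf m (2*m+4) = 2 := by
    simp only [wf]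
    rw [if_neg (by omega), if_neg (by omega), if_neg (by omega)]
  rw [show 2*m+5 = (2*m+3)+2 from by ring, cont, hw]
  rw [show 2*m+3+1 = m+3+(m+1) from by ring, h2,
    show 2*m+3 = m+2+(m+1) from by ring, h1]
  obtain ⟨⟨a1, b1⟩, a2, b2⟩ := K m
  rw [show m+1+1 = m+2 from rfl, a1, a2, b1, b2]
  have h3 : oddFib (m+2) = 3 * oddFib (m+1) - oddFib m := rfl
  rw [h3]; ring

theorem det_gramLattice (n : ℕ) (hn : 2 ≤ n) :
    (gramLattice n).det = oddFib n ^ 2 := by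
  obtain ⟨m, rfl⟩ : ∃ m, n = m + 2 := ⟨n - 2, by omega⟩
  have hg : gramLattice (m+2) = tri (wf m) (2*(m+2)+1) := by
    ext i j
    rcases eq_or_ne i j with rfl | hne
    · simp only [gramLattice, tri, Matrix.of_apply, if_pos rfl, diagWeights, wf]
      have h1 : m + 2 - 1 = m + 1 := by omega
      have h4 : ((i:ℕ) < 2*(m+2)) ↔ ((i:ℕ) < 2*m+4) := by omega
      have h5 : ((i:ℕ) < m+2+1) ↔ ((i:ℕ) < m+3) := by omega
      rw [h1]
      simp only [h4, h5]
    · have hne' : (i : ℕ) ≠ (j : ℕ) := fun h => hne (Fin.ext h)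
      simp only [gramLattice, tri, Matrix.of_apply, if_neg hne, if_neg hne']
  rw [hg, tri_det, show 2*(m+2)+1 = 2*m+5 from by ring, final]
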